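/- If 5/3 < γ ≤ 2 and L_min² < L² < 1 where L_min² = (9/4)(γ-1)²/(γ-2/3)³, then the equation G(y) = L² has exactly two solutions y₁, y₂ in (0, γ-1), satisfying 0 < y₁ < (3γ-5)/9 < y₂. -/

import Mathlib

open Set

theorem stmt_5 (γ : ℝ) (hγ1 : 5 / 3 < γ) (hγ2 : γ ≤ 2) (L2 : ℝ)
    (hL2min : 9 / 4 * (γ - 1) ^ 2 / (γ - 2 / 3) ^ 3 < L2) (hL2 : L2 < 1) :
    ∃ y₁ y₂ : ℝ, 0 < y₁ ∧ y₁ < (3 * γ - 5) / 9 ∧ (3 * γ - 5) / 9 < y₂ ∧ y₂ < γ - 1 ∧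
      ((1 + 3 * y₁) * (1 - y₁ / (γ - 1)) ^ 2)⁻¹ = L2 ∧
      ((1 + 3 * y₂) * (1 - y₂ / (γ - 1)) ^ 2)⁻¹ = L2 ∧
      ∀ y ∈ Set.Ioo (0:ℝ) (γ - 1),
        ((1 + 3 * y) * (1 - y / (γ - 1)) ^ 2)⁻¹ = L2 → y = y₁ ∨ y = y₂ := by
  have ha0 : (0:ℝ) < γ - 1 := by linarith
  have hane : γ - 1 ≠ 0 := ne_of_gt ha0
  set f : ℝ → ℝ := fun y => (1 + 3 * y) * (1 - y / (γ - 1)) ^ 2 with hf_def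
  set c : ℝ := (3 * γ - 5) / 9 with hc_def
  have hc0 : 0 < c := by rw [hc_def]; linarith
  have hca : c < γ - 1 := by rw [hc_def]; linarith
  have hderiv : ∀ y : ℝ, HasDerivAt f
      (((γ - 1) - y) * (3 * (γ - 1) - 2 - 9 * y) / (γ - 1) ^ 2) y := by
    intro y
    have h1 : HasDerivAt (fun y : ℝ => 1 + 3 * y) 3 y := by
      simpa using ((hasDerivAt_id y).const_mul (3:ℝ)).const_add 1
    have h2 : HasDerivAt (fun y : ℝ => 1 - y / (γ - 1)) (-(1 / (γ - 1))) y := by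
      simpa using ((hasDerivAt_id y).div_const (γ - 1)).const_sub 1
    have h4 : HasDerivAt (fun y : ℝ => (1 + 3 * y) * (1 - y / (γ - 1)) ^ 2)
        (3 * (1 - y / (γ - 1)) ^ 2 + (1 + 3 * y) * ((2:ℕ) * (1 - y / (γ - 1)) ^ (2 - 1) * -(1 / (γ - 1)))) y :=
      h1.mul (h2.pow 2)
    convert h4 using 1
    simp only [show (2:ℕ) - 1 = 1 from rfl, pow_one, Nat.cast_ofNat]
    field_simp
    ring
  have hcont : Continuous f := by
    rw [hf_def]; fun_prop
  have hmono : StrictMonoOn f (Icc 0 c) := by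
    apply strictMonoOn_of_deriv_pos (convex_Icc 0 c) hcont.continuousOn
    intro y hy
    rw [interior_Icc] at hy
    rw [(hderiv y).deriv]
    have h1 : 0 < (γ - 1) - y := by
      have := hy.2; rw [hc_def] at this; linarith
    have h2 : 0 < 3 * (γ - 1) - 2 - 9 * y := by
      have := hy.2; rw [hc_def] at this; linarith
    positivity
  have hanti : StrictAntiOn f (Icc c (γ - 1)) := by
    apply strictAntiOn_of_deriv_neg (convex_Icc c (γ - 1)) hcont.continuousOn
    intro y hy
    rw [interior_Icc] at hy
    rw [(hderiv y).deriv]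
    have h1 : 0 < (γ - 1) - y := by linarith [hy.2]
    have h2 : 3 * (γ - 1) - 2 - 9 * y < 0 := by
      have := hy.1; rw [hc_def] at this; linarith
    exact div_neg_of_neg_of_pos (mul_neg_of_pos_of_neg h1 h2) (by positivity)
  have hf0 : f 0 = 1 := by simp [hf_def]
  have hfa : f (γ - 1) = 0 := by
    simp [hf_def, div_self hane]
  have hE : (0:ℝ) < (γ - 1) ^ 2 := by positivity
  have hD : (0:ℝ) < (γ - 2 / 3) ^ 3 := by nlinarith
  have hL2pos : 0 < L2 :=
    lt_trans (div_pos (by nlinarith) hD) hL2min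
  have hfcv : f c = 4 / 9 * (γ - 2 / 3) ^ 3 / (γ - 1) ^ 2 := by
    rw [hf_def, hc_def]
    field_simp
    ring
  have hfcpos : 0 < f c := by rw [hfcv]; positivity
  have hinvfc : (f c)⁻¹ < L2 := by
    have : (f c)⁻¹ = 9 / 4 * (γ - 1) ^ 2 / (γ - 2 / 3) ^ 3 := by
      rw [hfcv]
      field_simp
    rw [this]; exact hL2min
  have h2 : L2⁻¹ < f c := by
    rwa [inv_lt_comm₀ hL2pos hfcpos]
  have h1 : 1 < L2⁻¹ := by
    rw [lt_inv_comm₀ one_pos hL2pos]; simpa using hL2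
  obtain ⟨y₁, hy₁mem, hy₁⟩ := intermediate_value_Ioo hc0.le hcont.continuousOn
    (show L2⁻¹ ∈ Ioo (f 0) (f c) from ⟨by rw [hf0]; exact h1, h2⟩)
  obtain ⟨y₂, hy₂mem, hy₂⟩ := intermediate_value_Ioo' hca.le hcont.continuousOn
    (show L2⁻¹ ∈ Ioo (f (γ - 1)) (f c) from ⟨by rw [hfa]; exact inv_pos.2 hL2pos, h2⟩)
  refine ⟨y₁, y₂, hy₁mem.1, hy₁mem.2, hy₂mem.1, hy₂mem.2, ?_, ?_, ?_⟩
  · show (f y₁)⁻¹ = L2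
    rw [hy₁, inv_inv]
  · show (f y₂)⁻¹ = L2
    rw [hy₂, inv_inv]
  · intro y hy hval
    have hfy : f y = L2⁻¹ := by
      rw [← hval, inv_inv]
    rcases lt_trichotomy y c with h | h | h
    · left
      exact hmono.injOn ⟨hy.1.le, h.le⟩ ⟨hy₁mem.1.le, hy₁mem.2.le⟩ (hfy.trans hy₁.symm)
    · exfalso
      rw [h] at hfy
      linarith [h2, hfy.symm.le]
    · right
      exact hanti.injOn ⟨h.le, hy.2.le⟩ ⟨hy₂mem.1.le, hy₂mem.2.le⟩ (hfy.trans hy₂.symm)
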